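/- For all positive integers $n$, $p$, $r$, $\sum_{\ell=1}^{n} (\ell)^{(p)} H_{\ell}^{(r)} = \Bigl(\sum_{m=1}^{p} c(p,m) A(m,r,n)\Bigr) H_n^{(r)} - \sum_{m=1}^{p} c(p,m) B(m,r,n)$, where $(\ell)^{(p)} = \ell(\ell+1)\cdots(\ell+p-1)$ is the rising factorial, $c(p,m) = (-1)^{p+m} s(p,m)$ are the unsigned Stirling numbers of the first kind (so that $x^{(p)} = \sum_{m=0}^{p} c(p,m) x^{m}$), $A(m,r,n) = \sum_{\ell=0}^{m} S(m,\ell)\, \ell!\, \binom{n+r-1}{r-1}^{-1} \binom{r+\ell-1}{\ell} \binom{r+n}{r+\ell}$, and $B(m,r,n) = \sum_{\ell=0}^{m} \frac{1}{r+\ell} S(m,\ell)\, \ell!\, \binom{r+\ell-1}{\ell} \binom{r+n-1}{r+\ell}$. -/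

import Mathlib

/-- The harmonic number `H_n = ∑_{j=1}^n 1/j`. -/
noncomputable def harm (n : ℕ) : ℝ := ∑ j ∈ Finset.Icc 1 n, (1 : ℝ) / j

/-- The hyperharmonic numbers: `H_n^{(1)} = H_n` and
`H_n^{(r)} = ∑_{ℓ=1}^n H_ℓ^{(r-1)}` for `r ≥ 2` (so `H_0^{(r)} = 0`). -/
noncomputable def hyp : ℕ → ℕ → ℝ
  | 0, _ => 0
  | 1, n => harm n
  | r + 2, n => ∑ ℓ ∈ Finset.Icc 1 n, hyp (r + 1) ℓ

/-- The rising factorial `(x)^{(m)} = x (x+1) ⋯ (x+m-1)`, with `(x)^{(0)} = 1`. -/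
noncomputable def rise (x : ℝ) (m : ℕ) : ℝ := ∏ i ∈ Finset.range m, (x + i)

/-- The Stirling numbers of the second kind `S(n,m)`, via
`S(n+1, m+1) = S(n, m) + (m+1) S(n, m+1)`. -/
def stirS : ℕ → ℕ → ℕ
  | 0, 0 => 1
  | 0, _ + 1 => 0
  | _ + 1, 0 => 0
  | n + 1, m + 1 => stirS n m + (m + 1) * stirS n (m + 1)

/-- The unsigned Stirling numbers of the first kind `c(p,m)`, characterized by
`x(x+1)⋯(x+p-1) = ∑_{m=0}^p c(p,m) x^m`, via `c(n+1, k) = n c(n, k) + c(n, k-1)`. -/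
def stirC : ℕ → ℕ → ℕ
  | 0, 0 => 1
  | 0, _ + 1 => 0
  | n + 1, 0 => n * stirC n 0
  | n + 1, k + 1 => n * stirC n (k + 1) + stirC n k

/-- `A(m,r,n) = ∑_{ℓ=0}^m S(m,ℓ) ℓ! C(n+r-1, r-1)⁻¹ C(r+ℓ-1, ℓ) C(r+n, r+ℓ)`. -/
noncomputable def Acoef (m r n : ℕ) : ℝ :=
  ∑ ℓ ∈ Finset.range (m + 1),
    (stirS m ℓ : ℝ) * (Nat.factorial ℓ : ℝ) * ((n + r - 1).choose (r - 1) : ℝ)⁻¹ *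
      ((r + ℓ - 1).choose ℓ : ℝ) * ((r + n).choose (r + ℓ) : ℝ)

/-- `B(m,r,n) = ∑_{ℓ=0}^m (1/(r+ℓ)) S(m,ℓ) ℓ! C(r+ℓ-1, ℓ) C(r+n-1, r+ℓ)`. -/
noncomputable def Bcoef (m r n : ℕ) : ℝ :=
  ∑ ℓ ∈ Finset.range (m + 1),
    (1 / (r + ℓ : ℝ)) * (stirS m ℓ : ℝ) * (Nat.factorial ℓ : ℝ) *
      ((r + ℓ - 1).choose ℓ : ℝ) * ((r + n - 1).choose (r + ℓ) : ℝ)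

lemma harm_zero : harm 0 = 0 := by simp [harm]

lemma harm_succ (n : ℕ) : harm (n+1) = harm n + 1/((n:ℝ)+1) := by
  unfold harm
  rw [Finset.sum_Icc_succ_top (by omega : 1 ≤ n+1)]
  push_cast
  ring

lemma hyp_one (n : ℕ) : hyp 1 n = harm n := rfl

lemma hyp_two (r n : ℕ) : hyp (r+2) n = ∑ ℓ ∈ Finset.Icc 1 n, hyp (r + 1) ℓ := rfl

lemma hyp_closed (r' : ℕ) : ∀ n : ℕ, hyp (r'+1) n = ((n + r').choose r' : ℝ) * (harm (n + r') - harm r') := by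
  induction r' with
  | zero => intro n; simp [hyp_one, harm_zero]
  | succ r' ih =>
    intro n
    induction n with
    | zero => simp [hyp_two]
    | succ n ihn =>
      rw [hyp_two] at ihn ⊢
      have e3 : n + (r' + 1) = n + r' + 1 := rfl
      rw [e3] at ihn
      rw [Finset.sum_Icc_succ_top (by omega : 1 ≤ n+1), ihn, ih (n+1)]
      have e1 : n + 1 + (r' + 1) = n + r' + 1 + 1 := by omega
      have e2 : n + 1 + r' = n + r' + 1 := by omega
      rw [e1, e2, harm_succ (n + r' + 1), harm_succ r']
      have pas : ((n + r' + 1 + 1).choose (r'+1) : ℝ) = ((n + r' + 1).choose r' : ℝ) + ((n + r' + 1).choose (r'+1) : ℝ) := by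
        rw [← Nat.cast_add, ← Nat.choose_succ_succ']
      have key : ((n + r' + 1 + 1) : ℝ) * ((n + r' + 1).choose r' : ℝ) = ((n + r' + 1 + 1).choose (r'+1) : ℝ) * ((r':ℝ)+1) := by
        have h := Nat.add_one_mul_choose_eq (n + r' + 1) r'
        have h2 := congrArg (Nat.cast : ℕ → ℝ) h
        push_cast at h2
        push_cast
        linarith [h2]
      have key' : ((n + r' + 1).choose r' : ℝ)/((r':ℝ)+1) = ((n + r' + 1 + 1).choose (r'+1) : ℝ)/((n:ℝ)+r'+1+1) := by
        rw [div_eq_div_iff (by positivity) (by positivity)]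
        push_cast at key
        linarith [key]
      push_cast at pas key' ⊢
      linear_combination (harm r' + 1/((r':ℝ)+1) - harm (n + r' + 1)) * pas + key'

lemma stirS_gt : ∀ m ℓ : ℕ, m < ℓ → stirS m ℓ = 0 := by
  intro m
  induction m with
  | zero => intro ℓ h; match ℓ, h with | ℓ+1, _ => rfl
  | succ m ih =>
    intro ℓ h
    match ℓ, h with
    | ℓ+1, h =>
      show stirS m ℓ + (ℓ + 1) * stirS m (ℓ+1) = 0
      rw [ih ℓ (by omega), ih (ℓ+1) (by omega)]
      simp

lemma stirC_gt : ∀ p k : ℕ, p < k → stirC p k = 0 := by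
  intro p
  induction p with
  | zero => intro k h; match k, h with | k+1, _ => rfl
  | succ p ih =>
    intro k h
    match k, h with
    | k+1, h =>
      show p * stirC p (k+1) + stirC p k = 0
      rw [ih (k+1) (by omega), ih k (by omega)]
      simp

lemma stirC_zero : ∀ p : ℕ, stirC (p+1) 0 = 0 := by
  intro p
  induction p with
  | zero => rfl
  | succ n ih => show (n+1) * stirC (n+1) 0 = 0; rw [ih, mul_zero]



lemma rise_eq_sum (p : ℕ) (x : ℝ) :
    rise x p = ∑ m ∈ Finset.range (p+1), (stirC p m : ℝ) * x^m := by
  induction p with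
  | zero => simp [rise, stirC]
  | succ n ih =>
    have lhs : rise x (n+1) = rise x n * (x + n) := Finset.prod_range_succ _ _
    have e1 : ∀ m, (stirC (n+1) (m+1) : ℝ) = n * stirC n (m+1) + stirC n m := by
      intro m; norm_cast
    have e0 : (stirC (n+1) 0 : ℝ) = n * stirC n 0 := by norm_cast
    have t1 : ∑ m ∈ Finset.range (n+2), (stirC (n+1) m : ℝ) * x^m
        = ∑ m ∈ Finset.range (n+1), (stirC (n+1) (m+1) : ℝ) * x^(m+1) + (stirC (n+1) 0 : ℝ) * x^0 :=
      Finset.sum_range_succ' _ (n+1)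
    have t2 : ∑ m ∈ Finset.range (n+2), (n:ℝ) * ((stirC n m : ℝ) * x^m)
        = ∑ m ∈ Finset.range (n+1), (n:ℝ) * ((stirC n (m+1) : ℝ) * x^(m+1)) + (n:ℝ)*((stirC n 0 : ℝ) * x^0) :=
      Finset.sum_range_succ' _ (n+1)
    have t3 : ∑ m ∈ Finset.range (n+2), (n:ℝ) * ((stirC n m : ℝ) * x^m)
        = ∑ m ∈ Finset.range (n+1), (n:ℝ) * ((stirC n m : ℝ) * x^m) := by
      rw [Finset.sum_range_succ, stirC_gt n (n+1) (by omega)]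
      simp
    have t4 : ∑ m ∈ Finset.range (n+1), (stirC (n+1) (m+1) : ℝ) * x^(m+1)
        = ∑ m ∈ Finset.range (n+1), ((stirC n m : ℝ)*x^(m+1) + (n:ℝ)*((stirC n (m+1):ℝ) * x^(m+1))) :=
      Finset.sum_congr rfl (by intro m _; rw [e1]; ring)
    rw [lhs, ih, t1, t4, Finset.sum_add_distrib, e0]
    have t5 : ∑ m ∈ Finset.range (n+1), (n:ℝ)*((stirC n (m+1):ℝ) * x^(m+1)) + ((n:ℝ) * (stirC n 0 : ℝ)) * x^0
        = ∑ m ∈ Finset.range (n+1), (n:ℝ) * ((stirC n m : ℝ) * x^m) := by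
      rw [← t3, t2]; ring
    rw [add_assoc, t5, Finset.sum_mul, ← Finset.sum_add_distrib]
    apply Finset.sum_congr rfl
    intro m _
    ring

lemma desc_key (N ℓ : ℕ) :
    N * N.descFactorial ℓ = N.descFactorial (ℓ+1) + ℓ * N.descFactorial ℓ := by
  rcases le_or_gt ℓ N with h | h
  · rw [Nat.descFactorial_succ, ← Nat.add_mul, Nat.sub_add_cancel h]
  · rw [Nat.descFactorial_eq_zero_iff_lt.mpr h,
      Nat.descFactorial_eq_zero_iff_lt.mpr (by omega : N < ℓ + 1)]
    simp

lemma pow_eq_sum (m N : ℕ) :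
    N ^ m = ∑ ℓ ∈ Finset.range (m+1), stirS m ℓ * N.descFactorial ℓ := by
  induction m with
  | zero => simp [stirS]
  | succ m ih =>
    have r1 : ∑ ℓ ∈ Finset.range (m+2), stirS (m+1) ℓ * N.descFactorial ℓ
        = ∑ ℓ ∈ Finset.range (m+1), stirS (m+1) (ℓ+1) * N.descFactorial (ℓ+1)
          + stirS (m+1) 0 * N.descFactorial 0 :=
      Finset.sum_range_succ' _ (m+1)
    have s0 : stirS (m+1) 0 = 0 := rfl
    have srec : ∀ ℓ, stirS (m+1) (ℓ+1) = stirS m ℓ + (ℓ+1) * stirS m (ℓ+1) := fun _ => rfl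
    have r2 : ∑ ℓ ∈ Finset.range (m+2), ℓ * stirS m ℓ * N.descFactorial ℓ
        = ∑ ℓ ∈ Finset.range (m+1), (ℓ+1) * stirS m (ℓ+1) * N.descFactorial (ℓ+1)
          + 0 * stirS m 0 * N.descFactorial 0 :=
      Finset.sum_range_succ' _ (m+1)
    have r3 : ∑ ℓ ∈ Finset.range (m+2), ℓ * stirS m ℓ * N.descFactorial ℓ
        = ∑ ℓ ∈ Finset.range (m+1), ℓ * stirS m ℓ * N.descFactorial ℓ := by
      rw [Finset.sum_range_succ, stirS_gt m (m+1) (by omega)]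
      simp
    rw [pow_succ, ih, r1, s0]
    have r4 : ∑ ℓ ∈ Finset.range (m+1), stirS (m+1) (ℓ+1) * N.descFactorial (ℓ+1)
        = ∑ ℓ ∈ Finset.range (m+1),
            (stirS m ℓ * N.descFactorial (ℓ+1) + (ℓ+1) * stirS m (ℓ+1) * N.descFactorial (ℓ+1)) := by
      apply Finset.sum_congr rfl
      intro ℓ _
      rw [srec ℓ, Nat.add_mul, Nat.mul_assoc]
    rw [r4, Finset.sum_add_distrib]
    have r5 : ∑ ℓ ∈ Finset.range (m+1), (ℓ+1) * stirS m (ℓ+1) * N.descFactorial (ℓ+1)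
        = ∑ ℓ ∈ Finset.range (m+1), ℓ * stirS m ℓ * N.descFactorial ℓ := by
      rw [← r3, r2]
      simp
    rw [r5, Finset.sum_mul, ← Finset.sum_add_distrib]
    apply Finset.sum_congr rfl
    intro ℓ _
    have := desc_key N ℓ
    calc stirS m ℓ * N.descFactorial ℓ * N = stirS m ℓ * (N * N.descFactorial ℓ) := by ring
      _ = stirS m ℓ * (N.descFactorial (ℓ+1) + ℓ * N.descFactorial ℓ) := by rw [this]
      _ = stirS m ℓ * N.descFactorial (ℓ+1) + ℓ * stirS m ℓ * N.descFactorial ℓ := by ring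

lemma binom_key (r' ℓ n : ℕ) :
    (r'+ℓ).choose ℓ * (r'+n+1).choose (r'+ℓ) = (n+1).choose ℓ * (r'+n+1).choose r' := by
  rcases le_or_gt ℓ (n+1) with h | h
  · have hc := Nat.choose_mul (n := r'+n+1) (show r' ≤ r'+ℓ by omega)
    have e1 : r'+n+1 - r' = n+1 := by omega
    have e2 : r'+ℓ - r' = ℓ := by omega
    rw [e1, e2] at hc
    have e3 : (r'+ℓ).choose r' = (r'+ℓ).choose ℓ := Nat.choose_symm_add
    rw [e3] at hc
    calc (r'+ℓ).choose ℓ * (r'+n+1).choose (r'+ℓ)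
        = (r'+n+1).choose (r'+ℓ) * (r'+ℓ).choose ℓ := Nat.mul_comm _ _
      _ = (r'+n+1).choose r' * (n+1).choose ℓ := hc
      _ = (n+1).choose ℓ * (r'+n+1).choose r' := Nat.mul_comm _ _
  · rw [Nat.choose_eq_zero_of_lt (show r'+n+1 < r'+ℓ by omega),
      Nat.choose_eq_zero_of_lt (show n+1 < ℓ by omega)]
    simp

noncomputable def aP (p r n : ℕ) : ℝ :=
  ∑ m ∈ Finset.Icc 1 p, (stirC p m : ℝ) *
    ∑ ℓ ∈ Finset.range (m+1),
      (stirS m ℓ : ℝ) * (Nat.factorial ℓ : ℝ) * ((r + ℓ - 1).choose ℓ : ℝ) *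
        ((r + n).choose (r + ℓ) : ℝ)

lemma acoef_mul (p r' n : ℕ) :
    (∑ m ∈ Finset.Icc 1 p, (stirC p m : ℝ) * Acoef m (r'+1) n) * (((n+r').choose r' : ℕ) : ℝ)
      = aP p (r'+1) n := by
  have hpos : (0:ℝ) < (((n+r').choose r' : ℕ) : ℝ) := by
    exact_mod_cast Nat.choose_pos (by omega)
  rw [Finset.sum_mul]
  unfold aP Acoef
  apply Finset.sum_congr rfl
  intro m _
  have e1 : n + (r'+1) - 1 = n + r' := by omega
  have e2 : (r'+1) - 1 = r' := by omega
  rw [e1, e2, mul_assoc]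
  congr 1
  rw [Finset.sum_mul]
  apply Finset.sum_congr rfl
  intro ℓ _
  have hne : (((n+r').choose r' : ℕ) : ℝ) ≠ 0 := ne_of_gt hpos
  field_simp

lemma rise_Icc (p : ℕ) (hp : 1 ≤ p) (x : ℝ) :
    ∑ m ∈ Finset.Icc 1 p, (stirC p m : ℝ) * x^m = rise x p := by
  rw [rise_eq_sum]
  have hins : Finset.range (p+1) = insert 0 (Finset.Icc 1 p) := by
    ext a
    simp only [Finset.mem_range, Finset.mem_insert, Finset.mem_Icc]
    omega
  rw [hins, Finset.sum_insert (by simp)]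
  obtain ⟨p', rfl⟩ : ∃ p', p = p' + 1 := ⟨p - 1, by omega⟩
  rw [stirC_zero]
  simp

lemma natInner (r' n m : ℕ) :
    ∑ ℓ ∈ Finset.range (m+1),
        stirS m ℓ * ℓ.factorial * ((r'+ℓ).choose ℓ) * ((r'+n+1).choose (r'+ℓ))
      = (n+1)^m * ((r'+n+1).choose r') := by
  have step : ∀ ℓ ∈ Finset.range (m+1),
      stirS m ℓ * ℓ.factorial * ((r'+ℓ).choose ℓ) * ((r'+n+1).choose (r'+ℓ))
        = stirS m ℓ * (n+1).descFactorial ℓ * ((r'+n+1).choose r') := by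
    intro ℓ _
    calc stirS m ℓ * ℓ.factorial * ((r'+ℓ).choose ℓ) * ((r'+n+1).choose (r'+ℓ))
        = stirS m ℓ * ℓ.factorial * ((r'+ℓ).choose ℓ * (r'+n+1).choose (r'+ℓ)) := by ring
      _ = stirS m ℓ * ℓ.factorial * ((n+1).choose ℓ * (r'+n+1).choose r') := by
          rw [binom_key]
      _ = stirS m ℓ * (ℓ.factorial * (n+1).choose ℓ) * ((r'+n+1).choose r') := by ring
      _ = stirS m ℓ * (n+1).descFactorial ℓ * ((r'+n+1).choose r') := by
          rw [← Nat.descFactorial_eq_factorial_mul_choose]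
  rw [Finset.sum_congr rfl step, ← Finset.sum_mul, ← pow_eq_sum]

lemma keyI (p r' n : ℕ) (hp : 1 ≤ p) :
    aP p (r'+1) (n+1) = aP p (r'+1) n + rise ((n:ℝ)+1) p * (((n+1+r').choose r' : ℕ) : ℝ) := by
  unfold aP
  have per_m : ∀ m ∈ Finset.Icc 1 p,
      (stirC p m : ℝ) * (∑ ℓ ∈ Finset.range (m+1),
          (stirS m ℓ : ℝ) * (Nat.factorial ℓ : ℝ) * (((r'+1) + ℓ - 1).choose ℓ : ℝ) *
            (((r'+1) + (n+1)).choose ((r'+1) + ℓ) : ℝ))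
        = (stirC p m : ℝ) * (∑ ℓ ∈ Finset.range (m+1),
            (stirS m ℓ : ℝ) * (Nat.factorial ℓ : ℝ) * (((r'+1) + ℓ - 1).choose ℓ : ℝ) *
              (((r'+1) + n).choose ((r'+1) + ℓ) : ℝ))
          + ((stirC p m : ℝ) * ((n:ℝ)+1)^m) * (((n+1+r').choose r' : ℕ) : ℝ) := by
    intro m _
    have hinner : (∑ ℓ ∈ Finset.range (m+1),
          (stirS m ℓ : ℝ) * (Nat.factorial ℓ : ℝ) * (((r'+1) + ℓ - 1).choose ℓ : ℝ) *
            (((r'+1) + (n+1)).choose ((r'+1) + ℓ) : ℝ))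
        = (∑ ℓ ∈ Finset.range (m+1),
            (stirS m ℓ : ℝ) * (Nat.factorial ℓ : ℝ) * (((r'+1) + ℓ - 1).choose ℓ : ℝ) *
              (((r'+1) + n).choose ((r'+1) + ℓ) : ℝ))
          + ((n:ℝ)+1)^m * (((n+1+r').choose r' : ℕ) : ℝ) := by
      have split : ∀ ℓ ∈ Finset.range (m+1),
          (stirS m ℓ : ℝ) * (Nat.factorial ℓ : ℝ) * (((r'+1) + ℓ - 1).choose ℓ : ℝ) *
              (((r'+1) + (n+1)).choose ((r'+1) + ℓ) : ℝ)
            = (stirS m ℓ : ℝ) * (Nat.factorial ℓ : ℝ) * (((r'+1) + ℓ - 1).choose ℓ : ℝ) *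
                (((r'+1) + n).choose ((r'+1) + ℓ) : ℝ)
              + (stirS m ℓ : ℝ) * (Nat.factorial ℓ : ℝ) * (((r'+ℓ).choose ℓ : ℕ) : ℝ) *
                (((r'+n+1).choose (r'+ℓ) : ℕ) : ℝ) := by
        intro ℓ _
        have e1 : (r'+1) + (n+1) = (r'+n+1) + 1 := by omega
        have e2 : (r'+1) + ℓ = (r'+ℓ) + 1 := by omega
        have e3 : (r'+1) + n = r'+n+1 := by omega
        have e4 : (r'+1) + ℓ - 1 = r'+ℓ := by omega
        rw [e4, e1, e2, e3, Nat.choose_succ_succ' (r'+n+1) (r'+ℓ)]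
        push_cast
        ring
      rw [Finset.sum_congr rfl split, Finset.sum_add_distrib]
      congr 1
      have hcast := congrArg (Nat.cast : ℕ → ℝ) (natInner r' n m)
      push_cast at hcast
      calc ∑ ℓ ∈ Finset.range (m+1),
            (stirS m ℓ : ℝ) * (Nat.factorial ℓ : ℝ) * (((r'+ℓ).choose ℓ : ℕ) : ℝ) *
              (((r'+n+1).choose (r'+ℓ) : ℕ) : ℝ)
          = ((n:ℝ)+1)^m * (((r'+n+1).choose r' : ℕ) : ℝ) := by
            exact_mod_cast hcast
        _ = ((n:ℝ)+1)^m * (((n+1+r').choose r' : ℕ) : ℝ) := by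
            rw [show r'+n+1 = n+1+r' from by omega]
    rw [hinner]
    ring
  rw [Finset.sum_congr rfl per_m, Finset.sum_add_distrib, ← Finset.sum_mul,
    rise_Icc p hp ((n:ℝ)+1)]

lemma keyII (p r' n : ℕ) :
    ∑ m ∈ Finset.Icc 1 p, (stirC p m : ℝ) * Bcoef m (r'+1) (n+1)
      = ∑ m ∈ Finset.Icc 1 p, (stirC p m : ℝ) * Bcoef m (r'+1) n
        + aP p (r'+1) n * (1/((n:ℝ)+(r':ℝ)+1)) := by
  unfold aP Bcoef
  rw [Finset.sum_mul, ← Finset.sum_add_distrib]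
  apply Finset.sum_congr rfl
  intro m _
  rw [Finset.mul_sum, Finset.mul_sum, Finset.mul_sum, Finset.sum_mul, ← Finset.sum_add_distrib]
  apply Finset.sum_congr rfl
  intro ℓ _
  have e1 : (r'+1) + (n+1) - 1 = (r'+n) + 1 := by omega
  have e5 : (r'+1) + ℓ - 1 = r'+ℓ := by omega
  have e2 : (r'+1) + ℓ = (r'+ℓ) + 1 := by omega
  have e3 : (r'+1) + n - 1 = r'+n := by omega
  have e4 : (r'+1) + n = (r'+n) + 1 := by omega
  rw [e1, e5, e2, e3, e4]
  have pas : (((r'+n+1).choose (r'+ℓ+1) : ℕ) : ℝ)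
      = (((r'+n).choose (r'+ℓ) : ℕ) : ℝ) + (((r'+n).choose (r'+ℓ+1) : ℕ) : ℝ) := by
    exact_mod_cast congrArg (Nat.cast : ℕ → ℝ) (Nat.choose_succ_succ' (r'+n) (r'+ℓ))
  have key : ((r'+n+1 : ℕ) : ℝ) * (((r'+n).choose (r'+ℓ) : ℕ) : ℝ)
      = (((r'+n+1).choose (r'+ℓ+1) : ℕ) : ℝ) * ((r'+ℓ+1 : ℕ) : ℝ) := by
    exact_mod_cast congrArg (Nat.cast : ℕ → ℝ) (Nat.add_one_mul_choose_eq (r'+n) (r'+ℓ))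
  have key' : (((r'+n).choose (r'+ℓ) : ℕ) : ℝ) / ((r':ℝ)+ℓ+1)
      = (((r'+n+1).choose (r'+ℓ+1) : ℕ) : ℝ) / ((n:ℝ)+(r':ℝ)+1) := by
    rw [div_eq_div_iff (by positivity) (by positivity)]
    push_cast at key ⊢
    linarith [key]
  push_cast at pas key' ⊢
  linear_combination
    ((stirC p m : ℝ) * (stirS m ℓ : ℝ) * (Nat.factorial ℓ : ℝ) * (((r'+ℓ).choose ℓ : ℕ) : ℝ)
      * (1/((r':ℝ)+(ℓ:ℝ)+1))) * pas
    + ((stirC p m : ℝ) * (stirS m ℓ : ℝ) * (Nat.factorial ℓ : ℝ) * (((r'+ℓ).choose ℓ : ℕ) : ℝ)) * key'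

lemma bcoef_zero (m r' : ℕ) : Bcoef m (r'+1) 0 = 0 := by
  unfold Bcoef
  apply Finset.sum_eq_zero
  intro ℓ _
  have h0 : ((r'+1) + 0 - 1).choose ((r'+1)+ℓ) = 0 := Nat.choose_eq_zero_of_lt (by omega)
  rw [h0]
  simp

lemma main_aux (p r' : ℕ) (hp : 1 ≤ p) : ∀ n : ℕ,
    ∑ ℓ ∈ Finset.Icc 1 n, rise (ℓ : ℝ) p * hyp (r'+1) ℓ =
      (∑ m ∈ Finset.Icc 1 p, (stirC p m : ℝ) * Acoef m (r'+1) n) * hyp (r'+1) n -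
        ∑ m ∈ Finset.Icc 1 p, (stirC p m : ℝ) * Bcoef m (r'+1) n := by
  intro n
  induction n with
  | zero =>
    have h0 : hyp (r'+1) 0 = 0 := by
      rw [hyp_closed]
      simp
    rw [h0]
    simp [bcoef_zero]
  | succ n ihn =>
    rw [Finset.sum_Icc_succ_top (by omega : 1 ≤ n+1), ihn]
    have hC1 : hyp (r'+1) n = (((n+r').choose r' : ℕ) : ℝ) * (harm (n+r') - harm r') :=
      hyp_closed r' n
    have hC2 : hyp (r'+1) (n+1)
        = (((n+1+r').choose r' : ℕ) : ℝ) * ((harm (n+r') + 1/((n:ℝ)+(r':ℝ)+1)) - harm r') := by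
      rw [hyp_closed r' (n+1), show n+1+r' = (n+r')+1 from by omega, harm_succ (n+r')]
      push_cast
      ring_nf
    have hA1 := acoef_mul p r' n
    have hA2 := acoef_mul p r' (n+1)
    have hI := keyI p r' n hp
    have hII := keyII p r' n
    push_cast
    linear_combination
      (∑ m ∈ Finset.Icc 1 p, (stirC p m : ℝ) * Acoef m (r'+1) n) * hC1
      + (harm (n+r') - harm r') * hA1
      + hII
      + (rise ((n:ℝ)+1) p - ∑ m ∈ Finset.Icc 1 p, (stirC p m : ℝ) * Acoef m (r'+1) (n+1)) * hC2
      - ((harm (n+r') - harm r') + 1/((n:ℝ)+(r':ℝ)+1)) * hA2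
      - ((harm (n+r') - harm r') + 1/((n:ℝ)+(r':ℝ)+1)) * hI

/-- For positive integers `n, p, r`,
`∑_{ℓ=1}^n (ℓ)^{(p)} H_ℓ^{(r)} = (∑_{m=1}^p c(p,m) A(m,r,n)) H_n^{(r)} - ∑_{m=1}^p c(p,m) B(m,r,n)`. -/
theorem sum_rise_mul_hyp (n p r : ℕ) (hn : 1 ≤ n) (hp : 1 ≤ p) (hr : 1 ≤ r) :
    ∑ ℓ ∈ Finset.Icc 1 n, rise (ℓ : ℝ) p * hyp r ℓ =
      (∑ m ∈ Finset.Icc 1 p, (stirC p m : ℝ) * Acoef m r n) * hyp r n -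
        ∑ m ∈ Finset.Icc 1 p, (stirC p m : ℝ) * Bcoef m r n := by
  obtain ⟨r', rfl⟩ : ∃ r', r = r' + 1 := ⟨r - 1, by omega⟩
  exact main_aux p r' hp n
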